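/- A companion to Ramanujan's Entry 1.6.6: Let q be a complex number with 0 < |q| < 1. Then ∑_{j=0}^∞ (−1)^j q^{j(j+1)/2} / [(q;q)_j · (1 + q^{j+1})] = (q;q)_∞ / (−q;q)_∞; equivalently, the left-hand side equals φ(−q) = ∑_{k=−∞}^∞ (−1)^k q^{k^2}. -/

import Mathlib

open Complex

/-- Finite q-Pochhammer symbol `(A;Q)_k = ∏_{r=0}^{k-1} (1 - A Q^r)`. -/
noncomputable def qp (A Q : ℂ) (k : ℕ) : ℂ := ∏ r ∈ Finset.range k, (1 - A * Q ^ r)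

/-- Infinite q-Pochhammer symbol `(A;Q)_∞ = ∏_{r=0}^{∞} (1 - A Q^r)`. -/
noncomputable def qpInf (A Q : ℂ) : ℂ := ∏' r : ℕ, (1 - A * Q ^ r)

/-- q-Pochhammer symbol with (possibly non-integer) index:
`(A;Q)_{c k} := (A;Q)_∞ / (A R^k;Q)_∞` where `R = Q^c`. -/
noncomputable def qpc (A Q R : ℂ) (k : ℕ) : ℂ := qpInf A Q / qpInf (A * R ^ k) Q

/-- q-Pochhammer symbol with shifted (possibly non-integer) index:
`(A;Q)_{c k + 1} := (A;Q)_∞ / (A Q R^k;Q)_∞` where `R = Q^c`. -/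
noncomputable def qpc1 (A Q R : ℂ) (k : ℕ) : ℂ := qpInf A Q / qpInf (A * Q * R ^ k) Q

open Filter Topology

lemma hasProd_zero_of_eq_zero {ι : Type*} {f : ι → ℂ} (i₀ : ι) (h : f i₀ = 0) :
    HasProd f 0 := by
  have he : ∀ᶠ s : Finset ι in atTop, (0 : ℂ) = ∏ i ∈ s, f i := by
    filter_upwards [Filter.eventually_ge_atTop {i₀}] with s hs
    exact (Finset.prod_eq_zero (hs (Finset.mem_singleton_self i₀)) h).symm
  exact Tendsto.congr' he tendsto_const_nhds

lemma one_sub_ne_zero_of_norm_lt_one {x : ℂ} (h : ‖x‖ < 1) : (1 : ℂ) - x ≠ 0 := by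
  intro hx
  have : x = 1 := by linear_combination -hx
  rw [this] at h; simp at h

lemma factor_ne_zero {A Q : ℂ} (hA : ‖A‖ < 1) (hQ : ‖Q‖ ≤ 1) (r : ℕ) :
    (1 : ℂ) - A * Q ^ r ≠ 0 := by
  apply one_sub_ne_zero_of_norm_lt_one
  rw [norm_mul, norm_pow]
  calc ‖A‖ * ‖Q‖ ^ r ≤ ‖A‖ * 1 := by
        refine mul_le_mul_of_nonneg_left ?_ (norm_nonneg A)
        exact pow_le_one₀ (norm_nonneg Q) hQ
    _ = ‖A‖ := mul_one _
    _ < 1 := hA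

lemma summable_pow_mul_geometric {c : ℝ} (hc0 : 0 ≤ c) (hc : c < 1) (K : ℝ) :
    Summable fun r : ℕ => K * c ^ r :=
  (summable_geometric_of_lt_one hc0 hc).mul_left K

lemma summable_log_aux (A Q : ℂ) (hQ : ‖Q‖ < 1) :
    Summable fun r : ℕ => Complex.log (1 - A * Q ^ r) := by
  have h0 : Tendsto (fun r : ℕ => ‖A‖ * ‖Q‖ ^ r) atTop (𝓝 0) := by
    simpa using (tendsto_pow_atTop_nhds_zero_of_norm_lt_one
      (by simpa using hQ)).const_mul ‖A‖
  have hev : ∀ᶠ r : ℕ in atTop, ‖A‖ * ‖Q‖ ^ r ≤ 1/2 :=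
    h0.eventually (eventually_le_nhds (by norm_num))
  apply Summable.of_norm_bounded_eventually_nat (g := fun r => 3/2 * (‖A‖ * ‖Q‖ ^ r))
  · exact ((summable_geometric_of_lt_one (norm_nonneg Q) hQ).mul_left ‖A‖).mul_left _
  · filter_upwards [hev] with r hr
    have : (1 : ℂ) - A * Q ^ r = 1 + (-(A * Q ^ r)) := by ring
    rw [this]
    have hb : ‖-(A * Q ^ r)‖ ≤ 1/2 := by
      rw [norm_neg, norm_mul, norm_pow]; exact hr
    have := Complex.norm_log_one_add_half_le_self hb
    calc ‖Complex.log (1 + -(A * Q ^ r))‖ ≤ 3/2 * ‖-(A * Q ^ r)‖ := this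
      _ = 3/2 * (‖A‖ * ‖Q‖ ^ r) := by rw [norm_neg, norm_mul, norm_pow]

lemma multipliable_qp (A Q : ℂ) (hQ : ‖Q‖ < 1) :
    Multipliable fun r : ℕ => 1 - A * Q ^ r := by
  by_cases hz : ∀ r : ℕ, (1 : ℂ) - A * Q ^ r ≠ 0
  · exact Complex.multipliable_of_summable_log (summable_log_aux A Q hQ)
  · push_neg at hz
    obtain ⟨r, hr⟩ := hz
    exact (hasProd_zero_of_eq_zero r hr).multipliable

lemma qpInf_ne_zero {A Q : ℂ} (hQ : ‖Q‖ < 1) (hz : ∀ r : ℕ, (1 : ℂ) - A * Q ^ r ≠ 0) :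
    qpInf A Q ≠ 0 := by
  have h2 := Complex.cexp_tsum_eq_tprod (f := fun r : ℕ => 1 - A * Q ^ r) hz
      (summable_log_aux A Q hQ)
  beta_reduce at h2
  rw [qpInf, ← h2]
  exact Complex.exp_ne_zero _

lemma tendsto_qp (A Q : ℂ) (hQ : ‖Q‖ < 1) :
    Tendsto (fun n => qp A Q n) atTop (𝓝 (qpInf A Q)) :=
  (multipliable_qp A Q hQ).hasProd.tendsto_prod_nat

lemma qp_succ (A Q : ℂ) (n : ℕ) : qp A Q (n + 1) = qp A Q n * (1 - A * Q ^ n) :=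
  Finset.prod_range_succ _ _

lemma qp_ne_zero {A Q : ℂ} (hz : ∀ r : ℕ, (1 : ℂ) - A * Q ^ r ≠ 0) (n : ℕ) :
    qp A Q n ≠ 0 :=
  Finset.prod_ne_zero_iff.mpr fun r _ => hz r

lemma qpInf_split (A Q : ℂ) (hQ : ‖Q‖ < 1) (N : ℕ) :
    qpInf A Q = qp A Q N * qpInf (A * Q ^ N) Q := by
  have key : ∀ n : ℕ, qp A Q (N + n) = qp A Q N * qp (A * Q ^ N) Q n := by
    intro n
    rw [qp, Finset.prod_range_add]
    congr 1
    apply Finset.prod_congr rfl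
    intro r _
    rw [pow_add]; ring
  have h1 : Tendsto (fun n : ℕ => qp A Q (N + n)) atTop (𝓝 (qpInf A Q)) := by
    have := (tendsto_qp A Q hQ).comp (tendsto_add_atTop_nat N)
    refine this.congr fun n => ?_
    simp [Function.comp, add_comm]
  have h2 : Tendsto (fun n : ℕ => qp A Q N * qp (A * Q ^ N) Q n) atTop
      (𝓝 (qp A Q N * qpInf (A * Q ^ N) Q)) :=
    (tendsto_qp (A * Q ^ N) Q hQ).const_mul _
  exact tendsto_nhds_unique (h1.congr key) h2


lemma qp_zero (A Q : ℂ) : qp A Q 0 = 1 := by simp [qp]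

lemma qpInf_def (A Q : ℂ) : qpInf A Q = ∏' r : ℕ, (1 - A * Q ^ r) := rfl

lemma qpInf_eq_zero_of_factor {A Q : ℂ} (r : ℕ) (h : (1:ℂ) - A * Q ^ r = 0) :
    qpInf A Q = 0 := by
  rw [qpInf_def]
  exact (hasProd_zero_of_eq_zero r h).tprod_eq

attribute [irreducible] qp qpInf

-- lower bound on the norms of the partial products
lemma qp_lower_bound {A Q : ℂ} (hQ : ‖Q‖ < 1) (hz : ∀ r : ℕ, (1 : ℂ) - A * Q ^ r ≠ 0) :
    ∃ c : ℝ, 0 < c ∧ ∀ n : ℕ, c ≤ ‖qp A Q n‖ := by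
  have hL : 0 < ‖qpInf A Q‖ := norm_pos_iff.mpr (qpInf_ne_zero hQ hz)
  have ht : Tendsto (fun n => ‖qp A Q n‖) atTop (𝓝 ‖qpInf A Q‖) :=
    (tendsto_qp A Q hQ).norm
  have hev : ∀ᶠ n : ℕ in atTop, ‖qpInf A Q‖ / 2 < ‖qp A Q n‖ :=
    ht.eventually (eventually_gt_nhds (by linarith))
  obtain ⟨N, hN⟩ := hev.exists_forall_of_atTop
  set F : Finset ℝ := (Finset.range (N + 1)).image fun n => ‖qp A Q n‖ with hF
  have hFne : F.Nonempty := ⟨‖qp A Q 0‖, Finset.mem_image.mpr ⟨0, by simp⟩⟩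
  set m := F.min' hFne with hm
  have hmpos : 0 < m := by
    obtain ⟨n, _, hn⟩ := Finset.mem_image.mp (F.min'_mem hFne)
    rw [hm, ← hn]
    exact norm_pos_iff.mpr (qp_ne_zero hz n)
  refine ⟨min m (‖qpInf A Q‖ / 2), lt_min hmpos (by linarith), fun n => ?_⟩
  rcases le_or_gt n N with h | h
  · refine le_trans (min_le_left _ _) ?_
    exact F.min'_le _ (Finset.mem_image.mpr ⟨n, Finset.mem_range.mpr (by omega), rfl⟩)
  · exact le_trans (min_le_right _ _) (hN n (by omega)).le

lemma tri_succ (j : ℕ) : (j + 1) * j / 2 = j * (j - 1) / 2 + j := by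
  cases j with
  | zero => rfl
  | succ k =>
      show (k + 2) * (k + 1) / 2 = (k + 1) * k / 2 + (k + 1)
      rw [show (k + 2) * (k + 1) = (k + 1) * k + 2 * (k + 1) by ring,
        Nat.add_mul_div_left _ _ (by norm_num : (0:ℕ) < 2)]

lemma le_tri (j : ℕ) : j ≤ (j + 1) * j / 2 := by
  have h : 2 * j ≤ (j + 1) * j := by
    cases j with
    | zero => simp
    | succ k => exact Nat.mul_le_mul_right _ (by omega)
  calc j = 2 * j / 2 := by omega
    _ ≤ (j + 1) * j / 2 := Nat.div_le_div_right h

noncomputable def eulerS (Q w : ℂ) : ℂ := ∑' j : ℕ, w ^ j * Q ^ (j * (j - 1) / 2) / qp Q Q j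

section Euler1
variable {Q : ℂ}

lemma self_factor_ne_zero (hQ : ‖Q‖ < 1) (r : ℕ) : (1 : ℂ) - Q * Q ^ r ≠ 0 :=
  factor_ne_zero hQ hQ.le r

lemma eulerS_term_succ (hQ : ‖Q‖ < 1) (w : ℂ) (j : ℕ) :
    w ^ (j+1) * Q ^ ((j+1) * ((j+1) - 1) / 2) / qp Q Q (j+1)
      = (w ^ j * Q ^ (j * (j - 1) / 2) / qp Q Q j) * (w * Q ^ j / (1 - Q * Q ^ j)) := by
  have h1 : qp Q Q j ≠ 0 := qp_ne_zero (self_factor_ne_zero hQ) j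
  have h2 : (1 : ℂ) - Q * Q ^ j ≠ 0 := self_factor_ne_zero hQ j
  rw [qp_succ, show (j+1) - 1 = j from rfl, tri_succ, pow_add]
  field_simp
  ring

lemma summable_eulerS (hQ : ‖Q‖ < 1) (w : ℂ) :
    Summable fun j : ℕ => w ^ j * Q ^ (j * (j - 1) / 2) / qp Q Q j := by
  apply summable_of_ratio_norm_eventually_le (r := 1/2) (by norm_num)
  have h2 : Tendsto (fun j : ℕ => w * Q ^ j / (1 - Q * Q ^ j)) atTop (𝓝 0) := by
    have hnum : Tendsto (fun j : ℕ => w * Q ^ j) atTop (𝓝 0) := by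
      simpa using (tendsto_pow_atTop_nhds_zero_of_norm_lt_one hQ).const_mul w
    have hden : Tendsto (fun j : ℕ => (1 : ℂ) - Q * Q ^ j) atTop (𝓝 1) := by
      have : Tendsto (fun j : ℕ => Q * Q ^ j) atTop (𝓝 0) := by
        simpa using (tendsto_pow_atTop_nhds_zero_of_norm_lt_one hQ).const_mul Q
      simpa using tendsto_const_nhds.sub this
    have h := hnum.div hden one_ne_zero
    rw [zero_div] at h
    exact h
  have h3 : Tendsto (fun j : ℕ => ‖w * Q ^ j / (1 - Q * Q ^ j)‖) atTop (𝓝 0) := by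
    simpa using h2.norm
  have hev : ∀ᶠ j : ℕ in atTop, ‖w * Q ^ j / (1 - Q * Q ^ j)‖ ≤ 1/2 :=
    h3.eventually (eventually_le_nhds (by norm_num : (0:ℝ) < 1/2))
  filter_upwards [hev] with j hj
  rw [eulerS_term_succ hQ w j, norm_mul]
  calc ‖w ^ j * Q ^ (j * (j - 1) / 2) / qp Q Q j‖ * ‖w * Q ^ j / (1 - Q * Q ^ j)‖
      ≤ ‖w ^ j * Q ^ (j * (j - 1) / 2) / qp Q Q j‖ * (1/2) := by
        exact mul_le_mul_of_nonneg_left hj (norm_nonneg _)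
    _ = 1/2 * ‖w ^ j * Q ^ (j * (j - 1) / 2) / qp Q Q j‖ := by ring

lemma eulerS_key (hQ : ‖Q‖ < 1) (w : ℂ) (j : ℕ) :
    w ^ (j+1) * Q ^ ((j+1) * ((j+1) - 1) / 2) / qp Q Q (j+1)
      = (w*Q) ^ (j+1) * Q ^ ((j+1) * ((j+1) - 1) / 2) / qp Q Q (j+1)
        + w * ((w*Q) ^ j * Q ^ (j * (j - 1) / 2) / qp Q Q j) := by
  have h1 : qp Q Q j ≠ 0 := qp_ne_zero (self_factor_ne_zero hQ) j
  have h2 : (1 : ℂ) - Q * Q ^ j ≠ 0 := self_factor_ne_zero hQ j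
  rw [qp_succ, show (j+1) - 1 = j from rfl, tri_succ, pow_add, mul_pow, mul_pow]
  field_simp
  ring

lemma eulerS_funeq (hQ : ‖Q‖ < 1) (w : ℂ) : eulerS Q w = (1 + w) * eulerS Q (w * Q) := by
  have hw := summable_eulerS hQ w
  have hwq := summable_eulerS hQ (w * Q)
  have hwq1 : Summable fun j : ℕ =>
      (w*Q) ^ (j+1) * Q ^ ((j+1) * ((j+1) - 1) / 2) / qp Q Q (j+1) :=
    (summable_nat_add_iff 1).mpr hwq
  have hterm0 : ∀ v : ℂ, v ^ 0 * Q ^ (0 * (0 - 1) / 2) / qp Q Q 0 = 1 := by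
    intro v; simp [qp_zero]
  calc eulerS Q w
      = 1 + ∑' j : ℕ, w ^ (j+1) * Q ^ ((j+1) * ((j+1) - 1) / 2) / qp Q Q (j+1) := by
        rw [eulerS, Summable.tsum_eq_zero_add hw, hterm0]
    _ = 1 + ∑' j : ℕ, ((w*Q) ^ (j+1) * Q ^ ((j+1) * ((j+1) - 1) / 2) / qp Q Q (j+1)
          + w * ((w*Q) ^ j * Q ^ (j * (j - 1) / 2) / qp Q Q j)) := by
        congr 1
        exact tsum_congr fun j => eulerS_key hQ w j
    _ = 1 + (∑' j : ℕ, (w*Q) ^ (j+1) * Q ^ ((j+1) * ((j+1) - 1) / 2) / qp Q Q (j+1)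
          + ∑' j : ℕ, w * ((w*Q) ^ j * Q ^ (j * (j - 1) / 2) / qp Q Q j)) := by
        rw [Summable.tsum_add hwq1 (hwq.mul_left w)]
    _ = (1 + ∑' j : ℕ, (w*Q) ^ (j+1) * Q ^ ((j+1) * ((j+1) - 1) / 2) / qp Q Q (j+1))
          + w * eulerS Q (w*Q) := by
        rw [tsum_mul_left]; rw [eulerS]; ring
    _ = eulerS Q (w*Q) + w * eulerS Q (w*Q) := by
        congr 1
        rw [eulerS, Summable.tsum_eq_zero_add hwq, hterm0]
    _ = (1 + w) * eulerS Q (w * Q) := by ring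

lemma eulerS_iter (hQ : ‖Q‖ < 1) (w : ℂ) (n : ℕ) :
    eulerS Q w = qp (-w) Q n * eulerS Q (w * Q ^ n) := by
  induction n with
  | zero => simp [qp_zero]
  | succ n ih =>
      rw [ih, eulerS_funeq hQ (w * Q ^ n), qp_succ]
      rw [show w * Q ^ n * Q = w * Q ^ (n+1) by ring]
      ring

lemma eulerS_bound (hQ : ‖Q‖ < 1) : ∃ C : ℝ, 0 ≤ C ∧ ∀ u : ℂ, ‖u‖ ≤ 1 → ‖eulerS Q u - 1‖ ≤ C * ‖u‖ := by
  obtain ⟨c, hc, hcb⟩ := qp_lower_bound hQ (self_factor_ne_zero hQ)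
  have hQ1 : (0:ℝ) < 1 - ‖Q‖ := by linarith
  refine ⟨c⁻¹ * (1 - ‖Q‖)⁻¹, mul_nonneg (inv_nonneg.mpr hc.le) (inv_nonneg.mpr hQ1.le),
    fun u hu => ?_⟩
  have hterm0 : u ^ 0 * Q ^ (0 * (0 - 1) / 2) / qp Q Q 0 = 1 := by simp [qp_zero]
  have hsum := summable_eulerS hQ u
  have heq : eulerS Q u - 1
      = ∑' j : ℕ, u ^ (j+1) * Q ^ ((j+1) * ((j+1) - 1) / 2) / qp Q Q (j+1) := by
    rw [eulerS, Summable.tsum_eq_zero_add hsum, hterm0]; ring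
  rw [heq]
  have hptb : ∀ j : ℕ, ‖u ^ (j+1) * Q ^ ((j+1) * ((j+1) - 1) / 2) / qp Q Q (j+1)‖
      ≤ ‖u‖ * (c⁻¹ * ‖Q‖ ^ j) := by
    intro j
    rw [norm_div, norm_mul, norm_pow, norm_pow]
    have hqpj : c ≤ ‖qp Q Q (j+1)‖ := hcb (j+1)
    have h1 : ‖u‖ ^ (j+1) ≤ ‖u‖ := by
      calc ‖u‖ ^ (j+1) ≤ ‖u‖ ^ 1 := pow_le_pow_of_le_one (norm_nonneg u) hu (by omega)
        _ = ‖u‖ := pow_one _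
    have h2 : ‖Q‖ ^ ((j+1) * ((j+1) - 1) / 2) ≤ ‖Q‖ ^ j := by
      apply pow_le_pow_of_le_one (norm_nonneg Q) hQ.le
      simpa using le_tri j
    calc ‖u‖ ^ (j+1) * ‖Q‖ ^ ((j+1) * ((j+1) - 1) / 2) / ‖qp Q Q (j+1)‖
        ≤ ‖u‖ * ‖Q‖ ^ j / c := by
          exact div_le_div₀ (by positivity)
            (mul_le_mul h1 h2 (by positivity) (norm_nonneg u)) hc hqpj
      _ = ‖u‖ * (c⁻¹ * ‖Q‖ ^ j) := by rw [div_eq_mul_inv]; ring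
  have hsumb : Summable fun j : ℕ => ‖u‖ * (c⁻¹ * ‖Q‖ ^ j) :=
    (((summable_geometric_of_lt_one (norm_nonneg Q) hQ).mul_left c⁻¹).mul_left ‖u‖)
  calc ‖∑' j : ℕ, u ^ (j+1) * Q ^ ((j+1) * ((j+1) - 1) / 2) / qp Q Q (j+1)‖
      ≤ ∑' j : ℕ, ‖u ^ (j+1) * Q ^ ((j+1) * ((j+1) - 1) / 2) / qp Q Q (j+1)‖ := by
        apply norm_tsum_le_tsum_norm
        exact ((summable_nat_add_iff 1).mpr hsum).norm
    _ ≤ ∑' j : ℕ, ‖u‖ * (c⁻¹ * ‖Q‖ ^ j) := by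
        apply Summable.tsum_le_tsum hptb ((summable_nat_add_iff 1).mpr hsum).norm hsumb
    _ = ‖u‖ * (c⁻¹ * (1 - ‖Q‖)⁻¹) := by
        rw [tsum_mul_left, tsum_mul_left, tsum_geometric_of_lt_one (norm_nonneg Q) hQ]
    _ = c⁻¹ * (1 - ‖Q‖)⁻¹ * ‖u‖ := by ring

theorem euler1 (hQ : ‖Q‖ < 1) (w : ℂ) : eulerS Q w = qpInf (-w) Q := by
  obtain ⟨C, hC0, hC⟩ := eulerS_bound hQ
  have hto : Tendsto (fun n : ℕ => eulerS Q (w * Q ^ n)) atTop (𝓝 1) := by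
    have h0 : Tendsto (fun n : ℕ => w * Q ^ n) atTop (𝓝 0) := by
      simpa using (tendsto_pow_atTop_nhds_zero_of_norm_lt_one hQ).const_mul w
    have h0n : Tendsto (fun n : ℕ => ‖w * Q ^ n‖) atTop (𝓝 0) := by simpa using h0.norm
    have hev : ∀ᶠ n : ℕ in atTop, ‖w * Q ^ n‖ ≤ 1 :=
      h0n.eventually (eventually_le_nhds (by norm_num : (0:ℝ) < 1))
    have hsq : Tendsto (fun n : ℕ => eulerS Q (w * Q ^ n) - 1) atTop (𝓝 0) := by
      apply squeeze_zero_norm' (a := fun n : ℕ => C * ‖w * Q ^ n‖)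
      · filter_upwards [hev] with n hn
        exact hC _ hn
      · simpa using h0.norm.const_mul C
    simpa using hsq.add_const 1
  have h1 : Tendsto (fun n : ℕ => qp (-w) Q n * eulerS Q (w * Q ^ n)) atTop
      (𝓝 (qpInf (-w) Q * 1)) := (tendsto_qp (-w) Q hQ).mul hto
  have h2 : Tendsto (fun n : ℕ => qp (-w) Q n * eulerS Q (w * Q ^ n)) atTop
      (𝓝 (eulerS Q w)) := by
    refine tendsto_const_nhds.congr fun n => eulerS_iter hQ w n
  rw [← mul_one (qpInf (-w) Q)]
  exact tendsto_nhds_unique h2 h1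

end Euler1

noncomputable def eulerT (Q z : ℂ) : ℂ := ∑' m : ℕ, z ^ m / qp Q Q m

section Euler2
variable {Q : ℂ}

lemma summable_eulerT (hQ : ‖Q‖ < 1) {z : ℂ} (hz : ‖z‖ < 1) :
    Summable fun m : ℕ => z ^ m / qp Q Q m := by
  obtain ⟨c, hc, hcb⟩ := qp_lower_bound hQ (self_factor_ne_zero hQ)
  apply Summable.of_norm_bounded (g := fun m => c⁻¹ * ‖z‖ ^ m)
  · exact (summable_geometric_of_lt_one (norm_nonneg z) hz).mul_left c⁻¹
  · intro m
    rw [norm_div, norm_pow]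
    rw [div_eq_mul_inv, mul_comm]
    apply mul_le_mul ?_ le_rfl (by positivity) (inv_nonneg.mpr hc.le)
    exact inv_anti₀ hc (hcb m)

lemma eulerT_key (hQ : ‖Q‖ < 1) (z : ℂ) (m : ℕ) :
    z ^ (m+1) / qp Q Q (m+1) = (z*Q) ^ (m+1) / qp Q Q (m+1) + z * (z ^ m / qp Q Q m) := by
  have h1 : qp Q Q m ≠ 0 := qp_ne_zero (self_factor_ne_zero hQ) m
  have h2 : (1 : ℂ) - Q * Q ^ m ≠ 0 := self_factor_ne_zero hQ m
  rw [qp_succ, mul_pow]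
  field_simp
  ring

lemma eulerT_funeq (hQ : ‖Q‖ < 1) {z : ℂ} (hz : ‖z‖ < 1) :
    eulerT Q z = eulerT Q (z * Q) + z * eulerT Q z := by
  have hzq : ‖z * Q‖ < 1 := by
    calc ‖z * Q‖ = ‖z‖ * ‖Q‖ := norm_mul _ _
      _ ≤ ‖z‖ * 1 := mul_le_mul_of_nonneg_left hQ.le (norm_nonneg z)
      _ < 1 := by simpa using hz
  have hw := summable_eulerT hQ hz
  have hwq := summable_eulerT hQ hzq
  have hwq1 : Summable fun m : ℕ => (z*Q) ^ (m+1) / qp Q Q (m+1) :=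
    (summable_nat_add_iff 1).mpr hwq
  have hterm0 : ∀ v : ℂ, v ^ 0 / qp Q Q 0 = 1 := by intro v; simp [qp_zero]
  calc eulerT Q z
      = 1 + ∑' m : ℕ, z ^ (m+1) / qp Q Q (m+1) := by
        rw [eulerT, Summable.tsum_eq_zero_add hw, hterm0]
    _ = 1 + ∑' m : ℕ, ((z*Q) ^ (m+1) / qp Q Q (m+1) + z * (z ^ m / qp Q Q m)) := by
        congr 1
        exact tsum_congr fun m => eulerT_key hQ z m
    _ = 1 + (∑' m : ℕ, (z*Q) ^ (m+1) / qp Q Q (m+1)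
          + ∑' m : ℕ, z * (z ^ m / qp Q Q m)) := by
        rw [Summable.tsum_add hwq1 (hw.mul_left z)]
    _ = (1 + ∑' m : ℕ, (z*Q) ^ (m+1) / qp Q Q (m+1)) + z * eulerT Q z := by
        rw [tsum_mul_left]; rw [eulerT]; ring
    _ = eulerT Q (z * Q) + z * eulerT Q z := by
        congr 1
        rw [eulerT, Summable.tsum_eq_zero_add hwq, hterm0]

lemma eulerT_iter (hQ : ‖Q‖ < 1) {z : ℂ} (hz : ‖z‖ < 1) (n : ℕ) :
    eulerT Q z * qp z Q n = eulerT Q (z * Q ^ n) := by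
  induction n with
  | zero => simp [qp_zero]
  | succ n ih =>
      have hu : ‖z * Q ^ n‖ < 1 := by
        calc ‖z * Q ^ n‖ = ‖z‖ * ‖Q‖ ^ n := by rw [norm_mul, norm_pow]
          _ ≤ ‖z‖ * 1 := mul_le_mul_of_nonneg_left
              (pow_le_one₀ (norm_nonneg Q) hQ.le) (norm_nonneg z)
          _ < 1 := by simpa using hz
      have hfe := eulerT_funeq hQ hu
      have : eulerT Q (z * Q ^ n * Q) = eulerT Q (z * Q ^ n) * (1 - z * Q ^ n) := by
        linear_combination -hfe
      rw [qp_succ, ← mul_assoc, ih, ← this]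
      congr 1
      ring

lemma eulerT_bound (hQ : ‖Q‖ < 1) {ρ : ℝ} (hρ0 : 0 ≤ ρ) (hρ : ρ < 1) :
    ∃ C : ℝ, 0 ≤ C ∧ ∀ u : ℂ, ‖u‖ ≤ ρ → ‖eulerT Q u - 1‖ ≤ C * ‖u‖ := by
  obtain ⟨c, hc, hcb⟩ := qp_lower_bound hQ (self_factor_ne_zero hQ)
  have hρ1 : (0:ℝ) < 1 - ρ := by linarith
  refine ⟨c⁻¹ * (1 - ρ)⁻¹, mul_nonneg (inv_nonneg.mpr hc.le) (inv_nonneg.mpr hρ1.le),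
    fun u hu => ?_⟩
  have hu1 : ‖u‖ < 1 := lt_of_le_of_lt hu hρ
  have hsum := summable_eulerT hQ hu1
  have heq : eulerT Q u - 1 = ∑' m : ℕ, u ^ (m+1) / qp Q Q (m+1) := by
    rw [eulerT, Summable.tsum_eq_zero_add hsum]
    simp [qp_zero]
  rw [heq]
  have hptb : ∀ m : ℕ, ‖u ^ (m+1) / qp Q Q (m+1)‖ ≤ ‖u‖ * (c⁻¹ * ρ ^ m) := by
    intro m
    rw [norm_div, norm_pow]
    have h1 : ‖u‖ ^ (m+1) ≤ ‖u‖ * ρ ^ m := by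
      rw [pow_succ, mul_comm]
      exact mul_le_mul_of_nonneg_left (pow_le_pow_left₀ (norm_nonneg u) hu m) (norm_nonneg u)
    calc ‖u‖ ^ (m+1) / ‖qp Q Q (m+1)‖ ≤ (‖u‖ * ρ ^ m) / c :=
          div_le_div₀ (by positivity) h1 hc (hcb (m+1))
      _ = ‖u‖ * (c⁻¹ * ρ ^ m) := by rw [div_eq_mul_inv]; ring
  have hsumb : Summable fun m : ℕ => ‖u‖ * (c⁻¹ * ρ ^ m) :=
    ((summable_geometric_of_lt_one hρ0 hρ).mul_left c⁻¹).mul_left ‖u‖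
  calc ‖∑' m : ℕ, u ^ (m+1) / qp Q Q (m+1)‖
      ≤ ∑' m : ℕ, ‖u ^ (m+1) / qp Q Q (m+1)‖ :=
        norm_tsum_le_tsum_norm ((summable_nat_add_iff 1).mpr hsum).norm
    _ ≤ ∑' m : ℕ, ‖u‖ * (c⁻¹ * ρ ^ m) :=
        Summable.tsum_le_tsum hptb ((summable_nat_add_iff 1).mpr hsum).norm hsumb
    _ = ‖u‖ * (c⁻¹ * (1 - ρ)⁻¹) := by
        rw [tsum_mul_left, tsum_mul_left, tsum_geometric_of_lt_one hρ0 hρ]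
    _ = c⁻¹ * (1 - ρ)⁻¹ * ‖u‖ := by ring

theorem euler2 (hQ : ‖Q‖ < 1) {z : ℂ} (hz : ‖z‖ < 1) :
    qpInf z Q * eulerT Q z = 1 := by
  obtain ⟨C, hC0, hC⟩ := eulerT_bound hQ (norm_nonneg z) hz
  have hub : ∀ n : ℕ, ‖z * Q ^ n‖ ≤ ‖z‖ := by
    intro n
    calc ‖z * Q ^ n‖ = ‖z‖ * ‖Q‖ ^ n := by rw [norm_mul, norm_pow]
      _ ≤ ‖z‖ * 1 := mul_le_mul_of_nonneg_left
          (pow_le_one₀ (norm_nonneg Q) hQ.le) (norm_nonneg z)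
      _ = ‖z‖ := mul_one _
  have h0 : Tendsto (fun n : ℕ => z * Q ^ n) atTop (𝓝 0) := by
    simpa using (tendsto_pow_atTop_nhds_zero_of_norm_lt_one hQ).const_mul z
  have hto : Tendsto (fun n : ℕ => eulerT Q (z * Q ^ n)) atTop (𝓝 1) := by
    have hsq : Tendsto (fun n : ℕ => eulerT Q (z * Q ^ n) - 1) atTop (𝓝 0) := by
      apply squeeze_zero_norm' (a := fun n : ℕ => C * ‖z * Q ^ n‖)
      · exact Eventually.of_forall fun n => hC _ (hub n)
      · simpa using h0.norm.const_mul C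
    simpa using hsq.add_const 1
  have h1 : Tendsto (fun n : ℕ => eulerT Q z * qp z Q n) atTop
      (𝓝 (eulerT Q z * qpInf z Q)) := (tendsto_qp z Q hQ).const_mul _
  have h2 : Tendsto (fun n : ℕ => eulerT Q z * qp z Q n) atTop (𝓝 1) :=
    hto.congr fun n => (eulerT_iter hQ hz n).symm
  rw [mul_comm]
  exact tendsto_nhds_unique h1 h2

end Euler2

section PartA
variable {q : ℂ}

lemma euler1' (hq : ‖q‖ < 1) (v : ℂ) :
    ∑' j : ℕ, v ^ j * q ^ (j * (j + 1) / 2) / qp q q j = qpInf (-(v * q)) q := by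
  rw [← euler1 hq (v * q), eulerS]
  apply tsum_congr
  intro j
  rw [mul_pow, show j * (j + 1) / 2 = j * (j - 1) / 2 + j by
    rw [← tri_succ j, mul_comm], pow_add]
  ring

lemma qpInf_tail (hq : ‖q‖ < 1) (m : ℕ) :
    qpInf (q ^ (m + 1)) q = qpInf q q / qp q q m := by
  have h := qpInf_split q q hq m
  rw [eq_div_iff (qp_ne_zero (self_factor_ne_zero hq) m), mul_comm]
  rw [h]
  congr 2
  rw [pow_succ]
  ring

noncomputable def Fa (q : ℂ) : ℕ × ℕ → ℂ :=
  fun p => ((-1 : ℂ) ^ p.1 * q ^ (p.1 * (p.1 + 1) / 2) / qp q q p.1)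
      * (-(q ^ (p.1 + 1))) ^ p.2

lemma Fa_eq (q : ℂ) (j m : ℕ) :
    Fa q (j, m) = ((-1 : ℂ) ^ j * q ^ (j * (j + 1) / 2) / qp q q j) * (-(q ^ (j + 1))) ^ m := rfl

lemma Fa_eq' (q : ℂ) (j m : ℕ) :
    Fa q (j, m) = (-q) ^ m * ((-(q ^ m)) ^ j * q ^ (j * (j + 1) / 2) / qp q q j) := by
  rw [Fa_eq, neg_pow (q ^ (j+1)) m, ← pow_mul, neg_pow (q ^ m) j, ← pow_mul, neg_pow q m,
    show (j+1) * m = m * j + m by ring, pow_add]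
  ring

set_option maxHeartbeats 2000000 in
theorem partA (hq : ‖q‖ < 1) :
    ∑' j : ℕ, (-1 : ℂ) ^ j * q ^ (j * (j + 1) / 2) / (qp q q j * (1 + q ^ (j + 1)))
      = qpInf q q / qpInf (-q) q := by
  obtain ⟨c, hc, hcb⟩ := qp_lower_bound hq (self_factor_ne_zero hq)
  -- summability of F
  have hFbound : ∀ p : ℕ × ℕ, ‖Fa q p‖ ≤ (c⁻¹ * ‖q‖ ^ p.1) * ‖q‖ ^ p.2 := by
    rintro ⟨j, m⟩
    have h1 : ‖(-1 : ℂ) ^ j * q ^ (j * (j + 1) / 2) / qp q q j‖ ≤ c⁻¹ * ‖q‖ ^ j := by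
      rw [norm_div, norm_mul, norm_pow, norm_pow, norm_neg, norm_one, one_pow, one_mul]
      have h2 : ‖q‖ ^ (j * (j + 1) / 2) ≤ ‖q‖ ^ j := by
        apply pow_le_pow_of_le_one (norm_nonneg q) hq.le
        rw [mul_comm j (j+1)]; exact le_tri j
      calc ‖q‖ ^ (j * (j + 1) / 2) / ‖qp q q j‖ ≤ ‖q‖ ^ j / c :=
            div_le_div₀ (by positivity) h2 hc (hcb j)
        _ = c⁻¹ * ‖q‖ ^ j := by rw [div_eq_mul_inv]; ring
    have h3 : ‖(-(q ^ (j + 1))) ^ m‖ ≤ ‖q‖ ^ m := by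
      rw [norm_pow, norm_neg, norm_pow, ← pow_mul]
      apply pow_le_pow_of_le_one (norm_nonneg q) hq.le
      nlinarith [Nat.zero_le m, Nat.zero_le j]
    rw [Fa_eq, norm_mul]
    exact mul_le_mul h1 h3 (norm_nonneg _) (by positivity)
  have hFsumm : Summable (Fa q) := by
    apply Summable.of_norm_bounded ?_ hFbound
    exact Summable.mul_of_nonneg
      ((summable_geometric_of_lt_one (norm_nonneg q) hq).mul_left c⁻¹)
      (summable_geometric_of_lt_one (norm_nonneg q) hq)
      (fun j => by positivity) (fun m => by positivity)
  have hgeo : ∀ j : ℕ, ‖-(q ^ (j + 1))‖ < 1 := by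
    intro j
    rw [norm_neg, norm_pow]
    exact pow_lt_one₀ (norm_nonneg q) hq (by omega)
  -- step 1 : LHS = iterated sum over j then m
  have step1 : ∀ j : ℕ,
      (-1 : ℂ) ^ j * q ^ (j * (j + 1) / 2) / (qp q q j * (1 + q ^ (j + 1)))
        = ∑' m : ℕ, Fa q (j, m) := by
    intro j
    simp only [Fa_eq]
    rw [tsum_mul_left, tsum_geometric_of_norm_lt_one (hgeo j)]
    rw [sub_neg_eq_add, div_mul_eq_div_mul_one_div]
    rw [one_div]
  -- step 2 : inner sum over j for fixed m
  have step2 : ∀ m : ℕ, ∑' j : ℕ, Fa q (j, m) = (-q) ^ m * (qpInf q q / qp q q m) := by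
    intro m
    have : ∀ j : ℕ, Fa q (j, m)
        = (-q) ^ m * ((-(q ^ m)) ^ j * q ^ (j * (j + 1) / 2) / qp q q j) :=
      fun j => Fa_eq' q j m
    rw [tsum_congr this, tsum_mul_left, euler1' hq, neg_mul, neg_neg, ← pow_succ]
    rw [qpInf_tail hq m]
  calc ∑' j : ℕ, (-1 : ℂ) ^ j * q ^ (j * (j + 1) / 2) / (qp q q j * (1 + q ^ (j + 1)))
      = ∑' (j : ℕ) (m : ℕ), Fa q (j, m) := tsum_congr step1
    _ = ∑' (m : ℕ) (j : ℕ), Fa q (j, m) := by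
        exact (Summable.tsum_comm' (f := fun j m => Fa q (j, m)) hFsumm hFsumm.prod_factor hFsumm.prod_symm.prod_factor).symm
    _ = ∑' m : ℕ, (-q) ^ m * (qpInf q q / qp q q m) := tsum_congr step2
    _ = qpInf q q * ∑' m : ℕ, (-q) ^ m / qp q q m := by
        rw [← tsum_mul_left]
        apply tsum_congr; intro m; ring
    _ = qpInf q q * eulerT q (-q) := by rw [eulerT]
    _ = qpInf q q / qpInf (-q) q := by
        have h2 := euler2 hq (z := -q) (by simpa using hq)
        have hne : qpInf (-q) q ≠ 0 := left_ne_zero_of_mul_eq_one h2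
        rw [eq_div_iff hne]
        calc qpInf q q * eulerT q (-q) * qpInf (-q) q
            = qpInf q q * (qpInf (-q) q * eulerT q (-q)) := by ring
          _ = qpInf q q := by rw [h2, mul_one]
end PartA

section PartB
variable {q : ℂ}

/-- the bilateral theta coefficients -/
noncomputable def thC (q : ℂ) : ℤ → ℂ := fun k => (-1 : ℂ) ^ k * q ^ (k ^ 2)
/-- the Euler-type coefficients -/
noncomputable def thU (q : ℂ) : ℕ → ℂ := fun m => q ^ m / qp (q ^ 2) (q ^ 2) m
/-- the double-sum term -/
noncomputable def thA (q : ℂ) : ℤ × ℕ → ℂ := fun p => thC q (p.1 + p.2) * thU q p.2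

/-- shift equivalence on `ℤ × ℕ` -/
def shiftEquiv' : ℤ × ℕ ≃ ℤ × ℕ where
  toFun p := (p.1 + p.2, p.2)
  invFun p := (p.1 - p.2, p.2)
  left_inv p := by simp
  right_inv p := by simp

lemma norm_thC (hq0 : q ≠ 0) (k : ℤ) : ‖thC q k‖ = ‖q‖ ^ (k.natAbs * k.natAbs) := by
  have h1 : (k ^ 2 : ℤ) = ((k.natAbs * k.natAbs : ℕ) : ℤ) := by
    rw [Int.natAbs_mul_self, sq]
  rw [thC, h1, zpow_natCast, norm_mul, norm_zpow, norm_neg, norm_one, one_zpow, one_mul,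
    norm_pow]

lemma nat_le_sq (n : ℕ) : n ≤ n * n := by
  cases n with
  | zero => simp
  | succ k => exact Nat.le_mul_of_pos_left _ (by omega)

lemma summable_norm_thC (hq0 : q ≠ 0) (hq : ‖q‖ < 1) :
    Summable fun k : ℤ => ‖thC q k‖ := by
  have hgeo := summable_geometric_of_lt_one (norm_nonneg q) hq
  apply Summable.of_nat_of_neg_add_one
  · apply Summable.of_nonneg_of_le (fun n => norm_nonneg _) ?_ hgeo
    intro n
    rw [norm_thC hq0]
    simp only [Int.natAbs_natCast]
    exact pow_le_pow_of_le_one (norm_nonneg q) hq.le (nat_le_sq n)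
  · apply Summable.of_nonneg_of_le (fun n => norm_nonneg _) ?_ hgeo
    intro n
    rw [norm_thC hq0]
    have h1 : ((-((n : ℤ)+1) : ℤ)).natAbs = n + 1 := by
      rw [Int.natAbs_neg]
      exact Int.natAbs_natCast (n+1)
    rw [h1]
    exact pow_le_pow_of_le_one (norm_nonneg q) hq.le
      (le_trans (Nat.le_succ n) (nat_le_sq (n+1)))

lemma q2_lt_one (hq : ‖q‖ < 1) : ‖q ^ 2‖ < 1 := by
  rw [norm_pow]
  exact pow_lt_one₀ (norm_nonneg q) hq (by omega)

lemma summable_norm_thU (hq : ‖q‖ < 1) : Summable fun m : ℕ => ‖thU q m‖ := by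
  obtain ⟨c, hc, hcb⟩ := qp_lower_bound (q2_lt_one hq) (self_factor_ne_zero (q2_lt_one hq))
  apply Summable.of_nonneg_of_le (fun m => norm_nonneg _) ?_
    ((summable_geometric_of_lt_one (norm_nonneg q) hq).mul_left c⁻¹)
  intro m
  rw [thU, norm_div, norm_pow]
  calc ‖q‖ ^ m / ‖qp (q^2) (q^2) m‖ ≤ ‖q‖ ^ m / c :=
      div_le_div_of_nonneg_left (by positivity) hc (hcb m)
    _ = c⁻¹ * ‖q‖ ^ m := by rw [div_eq_mul_inv]; ring

lemma summable_sep (hq0 : q ≠ 0) (hq : ‖q‖ < 1) :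
    Summable fun p : ℤ × ℕ => thC q p.1 * thU q p.2 := by
  apply Summable.of_norm
  have := Summable.mul_of_nonneg (summable_norm_thC hq0 hq) (summable_norm_thU hq)
    (fun k => norm_nonneg _) (fun m => norm_nonneg _)
  apply Summable.of_nonneg_of_le (fun p => norm_nonneg _) ?_ this
  rintro ⟨k, m⟩
  rw [norm_mul]

lemma summable_thA (hq0 : q ≠ 0) (hq : ‖q‖ < 1) : Summable (thA q) := by
  have h : thA q = (fun p : ℤ × ℕ => thC q p.1 * thU q p.2) ∘ shiftEquiv' := rfl
  rw [h]
  exact (shiftEquiv'.summable_iff).mpr (summable_sep hq0 hq)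

lemma thA_tsum_sep (hq0 : q ≠ 0) (hq : ‖q‖ < 1) :
    ∑' p : ℤ × ℕ, thA q p = (∑' k : ℤ, thC q k) * ∑' m : ℕ, thU q m := by
  have h1 : ∑' p : ℤ × ℕ, thA q p = ∑' p : ℤ × ℕ, thC q p.1 * thU q p.2 :=
    shiftEquiv'.tsum_eq (f := fun p : ℤ × ℕ => thC q p.1 * thU q p.2)
  rw [h1, Summable.tsum_prod (summable_sep hq0 hq)]
  calc ∑' (k : ℤ) (m : ℕ), thC q k * thU q m
      = ∑' (k : ℤ), thC q k * ∑' m : ℕ, thU q m := by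
        apply tsum_congr; intro k; rw [tsum_mul_left]
    _ = (∑' k : ℤ, thC q k) * ∑' m : ℕ, thU q m := tsum_mul_right

lemma cast_mm (m : ℕ) : ((m * (m - 1) : ℕ) : ℤ) = (m : ℤ) * m - m := by
  cases m with
  | zero => simp
  | succ k => push_cast; ring

lemma even_mm (m : ℕ) : 2 * (m * (m - 1) / 2) = m * (m - 1) := by
  have he : Even (m * (m - 1)) := by
    cases m with
    | zero => simp
    | succ k =>
        rw [Nat.succ_sub_one, Nat.mul_comm]
        exact Nat.even_mul_succ_self k
  obtain ⟨t, ht⟩ := he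
  omega

lemma thA_term_eq (hq0 : q ≠ 0) (n : ℤ) (m : ℕ) :
    thA q (n, m) = ((-1 : ℂ) ^ n * q ^ (n ^ 2))
      * ((-(q ^ (2 * n + 2))) ^ m * (q ^ 2) ^ (m * (m - 1) / 2) / qp (q ^ 2) (q ^ 2) m) := by
  have hm1 : ((-1 : ℂ)) ≠ 0 := by norm_num
  have e1 : (-1 : ℂ) ^ (n + (m : ℤ)) = (-1 : ℂ) ^ n * (-1 : ℂ) ^ (m : ℤ) := zpow_add₀ hm1 n m
  have e2 : ((-(q ^ (2 * n + 2))) : ℂ) ^ m = (-1 : ℂ) ^ m * (q ^ (2 * n + 2)) ^ m :=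
    neg_pow _ m
  have e3 : ((q ^ (2 * n + 2) : ℂ)) ^ m = q ^ ((2 * n + 2) * m) := by
    rw [← zpow_natCast (q ^ (2 * n + 2) : ℂ) m, ← zpow_mul]
  have e4 : ((q ^ 2 : ℂ)) ^ (m * (m - 1) / 2) = q ^ ((m * (m - 1) : ℕ)) := by
    rw [← pow_mul, even_mm]
  have e5 : (q : ℂ) ^ ((m * (m - 1) : ℕ)) = q ^ (((m * (m - 1) : ℕ)) : ℤ) :=
    (zpow_natCast q _).symm
  have e6 : (q : ℂ) ^ (m : ℕ) = q ^ ((m : ℕ) : ℤ) := (zpow_natCast q _).symm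
  have e7 : ((-1 : ℂ)) ^ ((m : ℕ) : ℤ) = (-1 : ℂ) ^ (m : ℕ) := zpow_natCast _ _
  rw [thA, thC, thU]
  simp only
  rw [e1, e2, e3, e4, e5, e6, e7]
  rw [div_eq_mul_inv, div_eq_mul_inv]
  have eexp : (q : ℂ) ^ ((n + (m:ℤ)) ^ 2) * q ^ ((m : ℕ) : ℤ)
      = q ^ (n ^ 2) * (q ^ ((2 * n + 2) * (m : ℤ)) * q ^ (((m * (m - 1) : ℕ)) : ℤ)) := by
    rw [← zpow_add₀ hq0, ← zpow_add₀ hq0, ← zpow_add₀ hq0]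
    congr 1
    rw [cast_mm]
    ring
  calc (-1 : ℂ) ^ n * (-1 : ℂ) ^ (m : ℕ) * q ^ ((n + (m:ℤ)) ^ 2)
        * (q ^ ((m : ℕ) : ℤ) * (qp (q ^ 2) (q ^ 2) m)⁻¹)
      = ((-1 : ℂ) ^ n * (-1 : ℂ) ^ (m : ℕ))
        * (q ^ ((n + (m:ℤ)) ^ 2) * q ^ ((m : ℕ) : ℤ)) * (qp (q ^ 2) (q ^ 2) m)⁻¹ := by
        ring
    _ = ((-1 : ℂ) ^ n * (-1 : ℂ) ^ (m : ℕ))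
        * (q ^ (n ^ 2) * (q ^ ((2 * n + 2) * (m : ℤ)) * q ^ (((m * (m - 1) : ℕ)) : ℤ)))
        * (qp (q ^ 2) (q ^ 2) m)⁻¹ := by rw [eexp]
    _ = _ := by ring

lemma thA_inner (hq0 : q ≠ 0) (hq : ‖q‖ < 1) (n : ℤ) :
    ∑' m : ℕ, thA q (n, m)
      = (-1 : ℂ) ^ n * q ^ (n ^ 2) * qpInf (q ^ (2 * n + 2)) (q ^ 2) := by
  have hq2 := q2_lt_one hq
  calc ∑' m : ℕ, thA q (n, m)
      = ∑' m : ℕ, ((-1 : ℂ) ^ n * q ^ (n ^ 2))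
          * ((-(q ^ (2 * n + 2))) ^ m * (q ^ 2) ^ (m * (m - 1) / 2)
            / qp (q ^ 2) (q ^ 2) m) := tsum_congr fun m => thA_term_eq hq0 n m
    _ = ((-1 : ℂ) ^ n * q ^ (n ^ 2)) * eulerS (q ^ 2) (-(q ^ (2 * n + 2))) := by
        rw [tsum_mul_left, eulerS]
    _ = (-1 : ℂ) ^ n * q ^ (n ^ 2) * qpInf (q ^ (2 * n + 2)) (q ^ 2) := by
        rw [euler1 hq2, neg_neg]

lemma qpInf_zero_of_neg (hq0 : q ≠ 0) {n : ℤ} (hn : n < 0) :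
    qpInf (q ^ (2 * n + 2)) (q ^ 2) = 0 := by
  set r : ℕ := (-(n + 1)).toNat with hr
  have hrr : (r : ℤ) = -(n + 1) := Int.toNat_of_nonneg (by omega)
  have hzero : (1 : ℂ) - q ^ (2 * n + 2) * (q ^ 2) ^ r = 0 := by
    have h : (q ^ (2 * n + 2) : ℂ) * (q ^ 2) ^ r = 1 := by
      rw [← pow_mul, ← zpow_natCast q (2 * r), ← zpow_add₀ hq0]
      rw [show 2 * n + 2 + ((2 * r : ℕ) : ℤ) = 0 by push_cast; omega]
      exact zpow_zero q
    rw [h]; ring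
  exact qpInf_eq_zero_of_factor r hzero

noncomputable def thP (q : ℂ) : ℤ → ℂ :=
  fun n => (-1 : ℂ) ^ n * q ^ (n ^ 2) * qpInf (q ^ (2 * n + 2)) (q ^ 2)

lemma tsum_thP_int (hq0 : q ≠ 0) :
    ∑' n : ℤ, thP q n = ∑' n : ℕ, thP q (n : ℤ) := by
  symm
  apply Function.Injective.tsum_eq (fun a b h => by exact_mod_cast h : Function.Injective (Nat.cast : ℕ → ℤ))
  intro x hx
  rcases x with n | n
  · exact ⟨n, rfl⟩
  · exfalso
    apply hx
    rw [thP]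
    rw [qpInf_zero_of_neg hq0 (Int.negSucc_lt_zero n), mul_zero]

lemma nat_nn_sq (n : ℕ) : n + n * (n - 1) = n ^ 2 := by
  cases n with
  | zero => simp
  | succ k => rw [Nat.succ_sub_one]; ring

lemma thP_nat (hq0 : q ≠ 0) (hq : ‖q‖ < 1) (n : ℕ) :
    thP q (n : ℤ) = qpInf (q ^ 2) (q ^ 2)
      * ((-q) ^ n * (q ^ 2) ^ (n * (n - 1) / 2) / qp (q ^ 2) (q ^ 2) n) := by
  have hq2 := q2_lt_one hq
  have hsplit : qpInf (q ^ (2 * (n:ℤ) + 2)) (q ^ 2)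
      = qpInf (q ^ 2) (q ^ 2) / qp (q ^ 2) (q ^ 2) n := by
    have h := qpInf_split (q ^ 2) (q ^ 2) hq2 n
    rw [eq_div_iff (qp_ne_zero (self_factor_ne_zero hq2) n), mul_comm]
    rw [h]
    congr 2
    rw [show (2 * (n:ℤ) + 2) = ((2 * n + 2 : ℕ) : ℤ) by push_cast; ring, zpow_natCast,
      ← pow_mul]
    rw [show 2 * n + 2 = 2 + 2 * n by ring, pow_add]
  have hcoef : (-1 : ℂ) ^ (n : ℤ) * q ^ ((n : ℤ) ^ 2)
      = (-q) ^ n * (q ^ 2) ^ (n * (n - 1) / 2) := by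
    rw [show ((n : ℤ) ^ 2) = ((n ^ 2 : ℕ) : ℤ) by push_cast; ring, zpow_natCast,
      zpow_natCast, ← pow_mul, even_mm, neg_pow q n, mul_assoc, ← pow_add, nat_nn_sq]
  rw [thP, hsplit, hcoef]
  ring

lemma tsum_thP (hq0 : q ≠ 0) (hq : ‖q‖ < 1) :
    ∑' n : ℤ, thP q n = qpInf (q ^ 2) (q ^ 2) * qpInf q (q ^ 2) := by
  have hq2 := q2_lt_one hq
  rw [tsum_thP_int hq0]
  calc ∑' n : ℕ, thP q (n : ℤ)
      = ∑' n : ℕ, qpInf (q ^ 2) (q ^ 2)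
          * ((-q) ^ n * (q ^ 2) ^ (n * (n - 1) / 2) / qp (q ^ 2) (q ^ 2) n) :=
        tsum_congr fun n => thP_nat hq0 hq n
    _ = qpInf (q ^ 2) (q ^ 2) * eulerS (q ^ 2) (-q) := by rw [tsum_mul_left, eulerS]
    _ = qpInf (q ^ 2) (q ^ 2) * qpInf q (q ^ 2) := by rw [euler1 hq2, neg_neg]

theorem theta_prod (hq0 : q ≠ 0) (hq : ‖q‖ < 1) :
    ∑' k : ℤ, thC q k
      = qpInf (q ^ 2) (q ^ 2) * qpInf q (q ^ 2) * qpInf q (q ^ 2) := by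
  have hq2 := q2_lt_one hq
  have hway2 : ∑' p : ℤ × ℕ, thA q p = qpInf (q ^ 2) (q ^ 2) * qpInf q (q ^ 2) := by
    rw [Summable.tsum_prod (summable_thA hq0 hq)]
    rw [show ∑' (n : ℤ) (m : ℕ), thA q (n, m) = ∑' n : ℤ, thP q n from
      tsum_congr fun n => thA_inner hq0 hq n]
    exact tsum_thP hq0 hq
  have hway1 := thA_tsum_sep hq0 hq
  have hU : ∑' m : ℕ, thU q m = eulerT (q ^ 2) q := rfl
  have h2 : qpInf q (q ^ 2) * eulerT (q ^ 2) q = 1 := euler2 hq2 hq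
  have h1 : (∑' k : ℤ, thC q k) * eulerT (q ^ 2) q
      = qpInf (q ^ 2) (q ^ 2) * qpInf q (q ^ 2) := by
    rw [← hU, ← hway1, hway2]
  calc ∑' k : ℤ, thC q k
      = (∑' k : ℤ, thC q k) * (qpInf q (q ^ 2) * eulerT (q ^ 2) q) := by
        rw [h2, mul_one]
    _ = ((∑' k : ℤ, thC q k) * eulerT (q ^ 2) q) * qpInf q (q ^ 2) := by ring
    _ = qpInf (q ^ 2) (q ^ 2) * qpInf q (q ^ 2) * qpInf q (q ^ 2) := by rw [h1]

lemma prod_mul_parity (hq : ‖q‖ < 1) :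
    qpInf q q * qpInf (-q) q = qpInf (q ^ 2) (q ^ 2) := by
  have h1 := multipliable_qp q q hq
  have h2 := multipliable_qp (-q) q hq
  rw [qpInf_def q q, qpInf_def (-q) q, qpInf_def (q ^ 2) (q ^ 2)]
  rw [← Multipliable.tprod_mul h1 h2]
  apply tprod_congr
  intro r
  have : (q ^ 2 : ℂ) * (q ^ 2) ^ r = (q * q ^ r) * (q * q ^ r) := by
    rw [← pow_mul, pow_mul']
    ring
  rw [this]
  ring

lemma prod_split_parity (hq : ‖q‖ < 1) :
    qpInf q q = qpInf q (q ^ 2) * qpInf (q ^ 2) (q ^ 2) := by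
  have hq2 := q2_lt_one hq
  have he : Multipliable fun k : ℕ => 1 - q * q ^ (2 * k) :=
    (multipliable_qp q (q ^ 2) hq2).congr fun k => by rw [pow_mul]
  have ho : Multipliable fun k : ℕ => 1 - q * q ^ (2 * k + 1) := by
    apply (multipliable_qp (q ^ 2) (q ^ 2) hq2).congr
    intro k
    rw [pow_add, pow_mul, pow_one]
    ring_nf
  have key := tprod_even_mul_odd (f := fun r : ℕ => 1 - q * q ^ r) he ho
  rw [qpInf_def q q, ← key, qpInf_def q (q ^ 2), qpInf_def (q ^ 2) (q ^ 2)]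
  congr 1
  · apply tprod_congr; intro k
    show 1 - q * q ^ (2 * k) = 1 - q * (q ^ 2) ^ k
    rw [pow_mul]
  · apply tprod_congr; intro k
    show 1 - q * q ^ (2 * k + 1) = 1 - q ^ 2 * (q ^ 2) ^ k
    rw [pow_add, pow_mul, pow_one]
    ring

theorem partB_products (hq0 : q ≠ 0) (hq : ‖q‖ < 1) :
    qpInf q q / qpInf (-q) q = ∑' k : ℤ, thC q k := by
  have h1 := prod_mul_parity hq
  have h2 := prod_split_parity hq
  have hfacq : ∀ r : ℕ, (1 : ℂ) - q * q ^ r ≠ 0 := self_factor_ne_zero hq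
  have hfacnq : ∀ r : ℕ, (1 : ℂ) - (-q) * q ^ r ≠ 0 :=
    factor_ne_zero (by simpa using hq) hq.le
  have hA : qpInf q q ≠ 0 := qpInf_ne_zero hq hfacq
  have hB : qpInf (-q) q ≠ 0 := qpInf_ne_zero hq hfacnq
  rw [theta_prod hq0 hq, div_eq_iff hB]
  apply mul_left_cancel₀ hA
  calc qpInf q q * qpInf q q
      = (qpInf q (q ^ 2) * qpInf (q ^ 2) (q ^ 2)) * (qpInf q (q ^ 2) * qpInf (q ^ 2) (q ^ 2)) := by
        rw [← h2]
    _ = (qpInf (q ^ 2) (q ^ 2) * qpInf q (q ^ 2) * qpInf q (q ^ 2)) * qpInf (q ^ 2) (q ^ 2) := by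
        ring
    _ = (qpInf (q ^ 2) (q ^ 2) * qpInf q (q ^ 2) * qpInf q (q ^ 2)) * (qpInf q q * qpInf (-q) q) := by
        rw [h1]
    _ = qpInf q q * (qpInf (q ^ 2) (q ^ 2) * qpInf q (q ^ 2) * qpInf q (q ^ 2) * qpInf (-q) q) := by
        ring


/-- a companion to Ramanujan's Entry 1.6.6, whose right-hand side
is Ramanujan's theta function `φ(-q)`. -/
theorem entry_1_6_6_companion (q : ℂ) (hq0 : 0 < ‖q‖)
    (hq : ‖q‖ < 1) :
    (∑' j : ℕ, (-1 : ℂ) ^ j * q ^ (j * (j + 1) / 2) /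
        (qp q q j * (1 + q ^ (j + 1)))
      = qpInf q q / qpInf (-q) q) ∧
    (∑' j : ℕ, (-1 : ℂ) ^ j * q ^ (j * (j + 1) / 2) /
        (qp q q j * (1 + q ^ (j + 1)))
      = ∑' k : ℤ, (-1 : ℂ) ^ k * q ^ (k ^ 2)) := by
  have hq' : ‖q‖ < 1 := hq
  have hq0' : q ≠ 0 := by
    intro h
    rw [h] at hq0
    simp at hq0
  constructor
  · exact partA hq'
  · rw [partA hq', partB_products hq0' hq']
    exact tsum_congr fun k => rfl
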